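/- Let θ > 0 be irrational with convergents p_k/q_k, let s ∈ (0,1), and suppose k is even and 1/q_{k+1} < 1 − s. Then there exists s' ∈ (0,1) such that no point of the integer lattice ℤ² lies strictly between the lines y = θx + s and y = (p_k/q_k)x + s' over the interval 0 ≤ x ≤ q_k; more precisely, for every integer l with 0 ≤ l ≤ q_k − 1, the real numbers θl + s and (p_k/q_k)l + s' have the same integer part. -/

import Mathlib

open Filter Topology

/-- Iterates of the Gauss map starting at `θ`. -/
noncomputable def gaussIter (θ : ℝ) : ℕ → ℝ
  | 0 => θ
  | k + 1 => (Int.fract (gaussIter θ k))⁻¹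

/-- The `k`-th partial quotient (digit) of the continued fraction of `θ`. -/
noncomputable def cfA (θ : ℝ) (k : ℕ) : ℤ := ⌊gaussIter θ k⌋

/-- Numerators of the continued fraction convergents of `θ`. -/
noncomputable def cfP (θ : ℝ) : ℕ → ℤ
  | 0 => cfA θ 0
  | 1 => cfA θ 1 * cfA θ 0 + 1
  | k + 2 => cfA θ (k + 2) * cfP θ (k + 1) + cfP θ k

/-- Denominators of the continued fraction convergents of `θ`. -/
noncomputable def cfQ (θ : ℝ) : ℕ → ℤ
  | 0 => 1
  | 1 => cfA θ 1
  | k + 2 => cfA θ (k + 2) * cfQ θ (k + 1) + cfQ θ k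



lemma gaussIter_irrational (θ : ℝ) (hθ : Irrational θ) : ∀ k, Irrational (gaussIter θ k)
  | 0 => hθ
  | k + 1 => by
    have := (gaussIter_irrational θ hθ k).sub_intCast ⌊gaussIter θ k⌋
    rw [gaussIter]
    rw [Int.fract]
    exact this.inv

lemma gaussIter_gt_one (θ : ℝ) (hθ : Irrational θ) (k : ℕ) : 1 < gaussIter θ (k + 1) := by
  have hir := gaussIter_irrational θ hθ k
  have h0 : 0 < Int.fract (gaussIter θ k) :=
    Int.fract_pos.mpr (hir.ne_int _)
  have h1 : Int.fract (gaussIter θ k) < 1 := Int.fract_lt_one _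
  rw [gaussIter]
  exact (one_lt_inv_iff₀).mpr ⟨h0, h1⟩

lemma cfA_pos (θ : ℝ) (hθ : Irrational θ) (k : ℕ) : 1 ≤ cfA θ (k + 1) := by
  have := gaussIter_gt_one θ hθ k
  rw [cfA]
  exact Int.le_floor.mpr (by exact_mod_cast this.le)

noncomputable def PP (θ : ℝ) : ℕ → ℤ
  | 0 => 1
  | 1 => cfA θ 0
  | k + 2 => cfA θ (k + 1) * PP θ (k + 1) + PP θ k

noncomputable def QQ (θ : ℝ) : ℕ → ℤ
  | 0 => 0
  | 1 => 1
  | k + 2 => cfA θ (k + 1) * QQ θ (k + 1) + QQ θ k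

lemma cfP_eq (θ : ℝ) : ∀ k, cfP θ k = PP θ (k + 1)
  | 0 => by simp [cfP, PP]
  | 1 => by simp [cfP, PP]
  | k + 2 => by
    rw [cfP, cfP_eq θ (k+1), cfP_eq θ k]
    rfl

lemma cfQ_eq (θ : ℝ) : ∀ k, cfQ θ k = QQ θ (k + 1)
  | 0 => by simp [cfQ, QQ]
  | 1 => by simp [cfQ, QQ]
  | k + 2 => by
    rw [cfQ, cfQ_eq θ (k+1), cfQ_eq θ k]
    rfl

lemma QQ_nonneg (θ : ℝ) (hθ : Irrational θ) : ∀ k, 0 ≤ QQ θ k ∧ 1 ≤ QQ θ (k + 1)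
  | 0 => by simp [QQ]
  | 1 => by
    refine ⟨by simp [QQ], ?_⟩
    show 1 ≤ cfA θ 1 * QQ θ 1 + QQ θ 0
    simp [QQ]
    exact cfA_pos θ hθ 0
  | k + 2 => by
    obtain ⟨h0, h1⟩ := QQ_nonneg θ hθ (k + 1)
    refine ⟨by linarith, ?_⟩
    show 1 ≤ cfA θ (k + 2) * QQ θ (k + 2) + QQ θ (k + 1)
    have ha := cfA_pos θ hθ (k + 1)
    nlinarith

lemma QQ_mono (θ : ℝ) (hθ : Irrational θ) (k : ℕ) : QQ θ (k + 1) ≤ QQ θ (k + 2) := by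
  show QQ θ (k+1) ≤ cfA θ (k + 1) * QQ θ (k + 1) + QQ θ k
  have ha := cfA_pos θ hθ k
  obtain ⟨h0, h1⟩ := QQ_nonneg θ hθ k
  nlinarith

lemma keyC (θ : ℝ) (hθ : Irrational θ) :
    ∀ k, θ * ((QQ θ (k + 1) : ℝ) * gaussIter θ (k + 1) + QQ θ k)
      = (PP θ (k + 1) : ℝ) * gaussIter θ (k + 1) + PP θ k
  | 0 => by
    have hne : Int.fract θ ≠ 0 := fun h =>
      (hθ.ne_int ⌊θ⌋) (by unfold Int.fract at h; linarith)
    have hx : gaussIter θ 1 = (Int.fract θ)⁻¹ := rfl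
    have hfr : Int.fract θ = θ - ⌊θ⌋ := rfl
    simp only [QQ, PP, hx]
    push_cast
    rw [cfA]
    show θ * (1 * (Int.fract θ)⁻¹ + 0) = (⌊θ⌋ : ℝ) * (Int.fract θ)⁻¹ + 1
    rw [hfr]
    have hne' : θ - (⌊θ⌋ : ℝ) ≠ 0 := fun hh => hne (by rw [hfr]; linarith)
    field_simp
    ring
  | k + 1 => by
    have ih := keyC θ hθ k
    set x := gaussIter θ (k + 1) with hxdef
    have hxirr := gaussIter_irrational θ hθ (k + 1)
    have hne : Int.fract x ≠ 0 := fun h =>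
      (hxirr.ne_int ⌊x⌋) (by unfold Int.fract at h; linarith)
    set y := gaussIter θ (k + 2) with hydef
    have hy : y = (Int.fract x)⁻¹ := rfl
    have hfr : Int.fract x = x - ⌊x⌋ := rfl
    have hy' : y * (x - (cfA θ (k + 1) : ℝ)) = 1 := by
      rw [hy, cfA, ← hfr]
      exact inv_mul_cancel₀ hne
    have hQ : (QQ θ (k + 2) : ℝ) = (cfA θ (k + 1) : ℝ) * QQ θ (k + 1) + QQ θ k := by
      rw [show QQ θ (k+2) = cfA θ (k + 1) * QQ θ (k + 1) + QQ θ k from rfl]; push_cast; ring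
    have hP : (PP θ (k + 2) : ℝ) = (cfA θ (k + 1) : ℝ) * PP θ (k + 1) + PP θ k := by
      rw [show PP θ (k+2) = cfA θ (k + 1) * PP θ (k + 1) + PP θ k from rfl]; push_cast; ring
    rw [hQ, hP]
    linear_combination y * ih - (θ * (QQ θ (k + 1) : ℝ) - (PP θ (k + 1) : ℝ)) * hy'

lemma keyD (θ : ℝ) : ∀ k, PP θ (k + 1) * QQ θ k - PP θ k * QQ θ (k + 1) = (-1) ^ (k + 1)
  | 0 => by simp [PP, QQ]
  | k + 1 => by
    have ih := keyD θ k
    have hQ : QQ θ (k + 2) = cfA θ (k + 1) * QQ θ (k + 1) + QQ θ k := rfl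
    have hP : PP θ (k + 2) = cfA θ (k + 1) * PP θ (k + 1) + PP θ k := rfl
    rw [hQ, hP, pow_succ]
    linear_combination (-1 : ℤ) * ih

lemma keyErr (θ : ℝ) (hθ : Irrational θ) (k : ℕ) :
    (θ * (QQ θ (k + 1) : ℝ) - PP θ (k + 1)) *
      ((QQ θ (k + 1) : ℝ) * gaussIter θ (k + 1) + QQ θ k) = (-1 : ℝ) ^ k := by
  have hC := keyC θ hθ k
  have hD : ((PP θ (k + 1) : ℝ) * QQ θ k - (PP θ k : ℝ) * QQ θ (k + 1)) = (-1 : ℝ) ^ (k + 1) := by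
    exact_mod_cast congrArg (Int.cast : ℤ → ℝ) (keyD θ k)
  linear_combination (QQ θ (k + 1) : ℝ) * hC - hD

lemma err_pos_lt (θ : ℝ) (hθ : Irrational θ) (k : ℕ) (hk : Even k) :
    0 < θ * (cfQ θ k : ℝ) - (cfP θ k : ℝ) ∧
      (θ * (cfQ θ k : ℝ) - (cfP θ k : ℝ)) * (cfQ θ (k + 1) : ℝ) < 1 := by
  have hE := keyErr θ hθ k
  rw [hk.neg_one_pow] at hE
  set x := gaussIter θ (k + 1) with hxdef
  have hx1 : 1 < x := gaussIter_gt_one θ hθ k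
  have hQ1 : (1 : ℝ) ≤ (QQ θ (k + 1) : ℝ) := by exact_mod_cast (QQ_nonneg θ hθ k).2
  have hQ0 : (0 : ℝ) ≤ (QQ θ k : ℝ) := by exact_mod_cast (QQ_nonneg θ hθ k).1
  set d : ℝ := (QQ θ (k + 1) : ℝ) * x + QQ θ k with hddef
  have hd0 : 0 < d := by nlinarith
  have hε0 : 0 < θ * (QQ θ (k + 1) : ℝ) - PP θ (k + 1) := by
    by_contra h
    push_neg at h
    nlinarith
  -- d > QQ (k + 2)
  have hfloor : (cfA θ (k + 1) : ℝ) < x := by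
    rcases lt_or_eq_of_le (Int.floor_le x) with h | h
    · exact h
    · exact absurd h.symm ((gaussIter_irrational θ hθ (k + 1)).ne_int _)
  have hQ2 : ((QQ θ (k + 2) : ℤ) : ℝ) < d := by
    have : QQ θ (k + 2) = cfA θ (k + 1) * QQ θ (k + 1) + QQ θ k := rfl
    rw [this]
    push_cast
    nlinarith
  constructor
  · rw [cfQ_eq, cfP_eq]; exact hε0
  · rw [cfQ_eq, cfP_eq, cfQ_eq]
    nlinarith

lemma q_dvd (θ : ℝ) (hθ : Irrational θ) (k : ℕ) (t : ℤ)
    (h : cfQ θ k ∣ cfP θ k * t) : cfQ θ k ∣ t := by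
  have hD := keyD θ k
  have hcop : IsCoprime (cfQ θ k) (cfP θ k) := by
    rw [cfQ_eq, cfP_eq]
    have he : ((-1 : ℤ) ^ (k + 1)) * ((-1 : ℤ) ^ (k + 1)) = 1 := by
      rw [← pow_add]
      exact (neg_one_pow_eq_one_iff_even (by norm_num)).mpr ⟨k + 1, by ring⟩
    exact ⟨-((-1 : ℤ) ^ (k + 1)) * PP θ k, ((-1 : ℤ) ^ (k + 1)) * QQ θ k,
      by linear_combination ((-1 : ℤ) ^ (k + 1)) * hD + he⟩
  exact hcop.dvd_of_dvd_mul_left (mul_comm (cfP θ k) t ▸ h)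

/-- Let `θ > 0` be irrational with convergents `p_k/q_k`, let `s ∈ (0,1)`,
and suppose `k` is even with `1/q_{k+1} < 1 − s`. Then there is `s' ∈ (0,1)` such that for
every integer `0 ≤ l ≤ q_k − 1`, the numbers `θ·l + s` and `(p_k/q_k)·l + s'` have the
same integer part; in particular no integer lattice point lies strictly between the lines
`y = θx + s` and `y = (p_k/q_k)x + s'` over `0 ≤ x ≤ q_k`. -/
theorem no_lattice_point_between_lines (θ : ℝ) (hθ : Irrational θ) (hpos : 0 < θ)
    (s : ℝ) (hs : s ∈ Set.Ioo (0 : ℝ) 1) (k : ℕ) (hk : Even k)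
    (hgap : 1 / (cfQ θ (k + 1) : ℝ) < 1 - s) :
    ∃ s' ∈ Set.Ioo (0 : ℝ) 1, ∀ l : ℤ, 0 ≤ l → l ≤ cfQ θ k - 1 →
      ⌊θ * (l : ℝ) + s⌋ = ⌊((cfP θ k : ℝ) / (cfQ θ k : ℝ)) * (l : ℝ) + s'⌋ := by
  obtain ⟨hs0, hs1⟩ := hs
  obtain ⟨hε0, hε1⟩ := err_pos_lt θ hθ k hk
  set p : ℤ := cfP θ k with hpdef
  set q : ℤ := cfQ θ k with hqdef
  set ε : ℝ := θ * (q : ℝ) - (p : ℝ) with hεdef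
  have hq1 : 1 ≤ q := by rw [hqdef, cfQ_eq]; exact (QQ_nonneg θ hθ k).2
  have hqR : (0 : ℝ) < (q : ℝ) := by exact_mod_cast lt_of_lt_of_le one_pos hq1
  have hq2 : (q : ℝ) ≤ (cfQ θ (k + 1) : ℝ) := by
    have : q ≤ cfQ θ (k + 1) := by rw [hqdef, cfQ_eq, cfQ_eq]; exact QQ_mono θ hθ k
    exact_mod_cast this
  have hqε : (q : ℝ) * ε < 1 := by nlinarith
  -- the functions n and m
  set n : ℤ → ℤ := fun l => ⌊θ * (l : ℝ) + s⌋ with hndef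
  set m : ℤ → ℤ := fun l => n l * q - p * l with hmdef
  have hmcast : ∀ l : ℤ, (m l : ℝ) = (n l : ℝ) * q - (p : ℝ) * l := by
    intro l; simp [hmdef]
  -- bounds on m
  have hub : ∀ l : ℤ, 0 ≤ l → l ≤ q - 1 → (m l : ℝ) < (q : ℝ) * s + (q : ℝ) * ε := by
    intro l hl0 hl1
    have h1 : (n l : ℝ) ≤ θ * (l : ℝ) + s := Int.floor_le _
    have hlR : (l : ℝ) ≤ (q : ℝ) - 1 := by exact_mod_cast hl1
    have hl0R : (0 : ℝ) ≤ (l : ℝ) := by exact_mod_cast hl0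
    rw [hmcast]
    nlinarith
  have hlb : ∀ l : ℤ, 0 ≤ l → l ≤ q - 1 → (q : ℝ) * s - (q : ℝ) < (m l : ℝ) := by
    intro l hl0 hl1
    have h1 : θ * (l : ℝ) + s < (n l : ℝ) + 1 := Int.lt_floor_add_one _
    have hl0R : (0 : ℝ) ≤ (l : ℝ) := by exact_mod_cast hl0
    rw [hmcast]
    nlinarith
  -- key gap bound
  have hgapm : ∀ l : ℤ, 0 ≤ l → l ≤ q - 1 → ∀ l' : ℤ, 0 ≤ l' → l' ≤ q - 1 →
      m l - m l' ≤ q - 1 := by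
    intro l hl0 hl1 l' hl'0 hl'1
    have h1 : (m l : ℝ) - (m l') < (q : ℝ) + 1 := by
      have := hub l hl0 hl1
      have := hlb l' hl'0 hl'1
      nlinarith
    have h2 : m l - m l' ≤ q := by
      have h3 : ((m l - m l' : ℤ) : ℝ) < ((q + 1 : ℤ) : ℝ) := by push_cast; linarith
      have h4 : m l - m l' < q + 1 := by exact_mod_cast h3
      omega
    rcases lt_or_eq_of_le h2 with h | h
    · omega
    · exfalso
      -- m l - m l' = q forces q ∣ (l' - l) hence l = l'
      have hmm0 : m l - m l' = (n l - n l') * q - p * (l - l') := by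
        simp only [hmdef]; ring
      have hmm : (n l - n l') * q - p * (l - l') = q := by rw [← hmm0]; exact h
      have hqd : q ∣ p * (l' - l) := ⟨1 - n l + n l', by linear_combination hmm⟩
      have hdvd := q_dvd θ hθ k (l' - l) (by rwa [← hqdef, ← hpdef])
      have habs : |l' - l| < q := abs_lt.mpr ⟨by omega, by omega⟩
      have h5 : l' - l = 0 := Int.eq_zero_of_abs_lt_dvd hdvd habs
      have h6 : l' = l := by omega
      rw [h6] at h
      omega
  -- maximum of m over Icc 0 (q-1)
  have hne : (Finset.Icc (0 : ℤ) (q - 1)).Nonempty := by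
    rw [Finset.nonempty_Icc]; omega
  obtain ⟨L, hLmem, hLmax⟩ := Finset.exists_max_image (Finset.Icc (0 : ℤ) (q - 1)) m hne
  obtain ⟨hL0, hL1⟩ := Finset.mem_Icc.mp hLmem
  -- m 0 = 0
  have hm0 : m 0 = 0 := by
    have hn0 : n 0 = 0 := by
      simp only [hndef]
      push_cast
      rw [mul_zero, zero_add]
      exact Int.floor_eq_zero_iff.mpr ⟨hs0.le, hs1⟩
    simp [hmdef, hn0]
  have hmL0 : 0 ≤ m L := by
    have := hLmax 0 (Finset.mem_Icc.mpr ⟨le_refl _, by omega⟩)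
    omega
  have hmLub : m L ≤ q - 1 := by
    have := hgapm L hL0 hL1 0 (le_refl _) (by omega)
    omega
  have hmLubR : (m L : ℝ) ≤ (q : ℝ) - 1 := by exact_mod_cast hmLub
  have h2q : (0 : ℝ) < 2 * (q : ℝ) := by linarith
  have hhalf : (0 : ℝ) < 1 / (2 * (q : ℝ)) := by positivity
  have hhalflt : 1 / (2 * (q : ℝ)) < 1 / (q : ℝ) :=
    one_div_lt_one_div_of_lt hqR (by linarith)
  -- define s'
  refine ⟨(m L : ℝ) / q + 1 / (2 * q), ⟨?_, ?_⟩, ?_⟩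
  · have : (0 : ℝ) ≤ (m L : ℝ) / q := div_nonneg (by exact_mod_cast hmL0) hqR.le
    linarith
  · have h1 : (m L : ℝ) / q ≤ ((q : ℝ) - 1) / q := by gcongr
    have h2 : ((q : ℝ) - 1) / q = 1 - 1 / q := by field_simp
    linarith
  · intro l hl0 hl1
    show n l = _
    symm
    rw [Int.floor_eq_iff]
    have hml := hmcast l
    have hpq : (p : ℝ) / q * l = (n l : ℝ) - (m l : ℝ) / q := by
      field_simp
      linear_combination hml
    have hlmem : l ∈ Finset.Icc (0 : ℤ) (q - 1) := Finset.mem_Icc.mpr ⟨hl0, hl1⟩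
    have hle : m l ≤ m L := hLmax l hlmem
    have hleR' : (m l : ℝ) ≤ (m L : ℝ) := by exact_mod_cast hle
    have hleR : (m l : ℝ) / q ≤ (m L : ℝ) / q := by gcongr
    have hgapR : (m L : ℝ) - (m l : ℝ) ≤ (q : ℝ) - 1 := by
      have := hgapm L hL0 hL1 l hl0 hl1
      push_cast
      exact_mod_cast this
    constructor
    · rw [hpq]; linarith
    · rw [hpq]
      have hdiff : ((m L : ℝ) - (m l : ℝ)) / q ≤ ((q : ℝ) - 1) / q := by gcongr
      have h2 : ((q : ℝ) - 1) / q = 1 - 1 / q := by field_simp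
      have h3 : ((m L : ℝ) - (m l : ℝ)) / q = (m L : ℝ) / q - (m l : ℝ) / q := by ring
      push_cast
      linarith
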